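/- Let D₁, D₂ ⊆ ℝⁿ be nonempty compact convex sets with D₁ ⊆ int D₂, h₁ < h₂ reals, T₁ = {(x, h₁) : x ∈ D₁}, T₂ = {(x, h₂) : x ∈ D₂}, F = conv(T₁ ∪ T₂) the top-heavy frustum with lateral S. Let â = (a, a₀) with a ∈ int D₁ and a₀ < h₁, and suppose trunc(â, T₂) is an upper envelope of F, i.e. F ⊆ trunc(â, T₂). Then Stp(S) ≤ Stp(S_a), where S_a is the lateral of trunc(â, T₂). -/

import Mathlib

open scoped ENNReal

section Helpers

variable {V : Type*} [NormedAddCommGroup V] [NormedSpace ℝ V]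

/-- Exit point of a ray from a bounded closed set. -/
lemma exit_point {s : Set V} (hsc : IsClosed s) (hsb : Bornology.IsBounded s)
    {x y : V} (hy : y ∈ s) (hxy : x ≠ y) :
    ∃ c : ℝ, 1 ≤ c ∧ x + c • (y - x) ∈ s ∧ x + c • (y - x) ∉ interior s := by
  have hyx : (0:ℝ) < ‖y - x‖ := by
    rw [norm_pos_iff, sub_ne_zero]; exact fun h => hxy h.symm
  set A := {c : ℝ | 1 ≤ c ∧ x + c • (y - x) ∈ s} with hA
  have h1A : (1:ℝ) ∈ A := ⟨le_rfl, by simpa using hy⟩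
  obtain ⟨R, hR⟩ := isBounded_iff_forall_norm_le.mp hsb
  have hbdd : BddAbove A := by
    refine ⟨(R + ‖x‖) / ‖y - x‖, fun c hc => ?_⟩
    have h1 : ‖x + c • (y - x)‖ ≤ R := hR _ hc.2
    have h2 : ‖c • (y - x)‖ ≤ ‖x + c • (y - x)‖ + ‖x‖ := by
      calc ‖c • (y - x)‖ = ‖(x + c • (y - x)) - x‖ := by congr 1; abel
        _ ≤ ‖x + c • (y - x)‖ + ‖x‖ := norm_sub_le _ _
    have h3 : c * ‖y - x‖ ≤ R + ‖x‖ := by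
      rw [norm_smul, Real.norm_eq_abs, abs_of_nonneg (by linarith [hc.1])] at h2
      linarith
    rw [le_div_iff₀ hyx]; exact h3
  have hAc : IsClosed A := by
    have : A = Set.Ici (1:ℝ) ∩ (fun c : ℝ => x + c • (y - x)) ⁻¹' s := by
      ext c; simp [hA, Set.mem_Ici]
    rw [this]
    exact isClosed_Ici.inter (hsc.preimage (by continuity))
  have hcA := hAc.csSup_mem ⟨1, h1A⟩ hbdd
  refine ⟨sSup A, hcA.1, hcA.2, fun hint => ?_⟩
  obtain ⟨ρ, hρ0, hρ⟩ := Metric.isOpen_iff.mp isOpen_interior _ hint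
  have hd : 0 < ρ / (2 * ‖y - x‖) := by positivity
  have hc' : sSup A + ρ / (2 * ‖y - x‖) ∈ A := by
    refine ⟨by linarith [hcA.1], interior_subset (hρ ?_)⟩
    rw [Metric.mem_ball, dist_eq_norm]
    have he : (x + (sSup A + ρ / (2 * ‖y - x‖)) • (y - x)) - (x + sSup A • (y - x))
        = (ρ / (2 * ‖y - x‖)) • (y - x) := by
      rw [add_smul]; abel
    rw [he, norm_smul, Real.norm_eq_abs, abs_of_pos hd]
    have hval : ρ / (2 * ‖y - x‖) * ‖y - x‖ = ρ / 2 := by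
      field_simp
    rw [hval]; linarith
  linarith [le_csSup hbdd hc']

lemma intrinsicInterior_subset_interior_of_top {s : Set V} (h : affineSpan ℝ s = ⊤) :
    intrinsicInterior ℝ s ⊆ interior s := by
  intro x hx
  obtain ⟨y, hy, rfl⟩ := mem_intrinsicInterior.mp hx
  have hopen : IsOpen ((affineSpan ℝ s : Set V)) := by
    rw [h, AffineSubspace.top_coe]; exact isOpen_univ
  have hemb := hopen.isOpenEmbedding_subtypeVal
  have h1 : IsOpen (Subtype.val ''
      interior ((Subtype.val : (affineSpan ℝ s : Set V) → V) ⁻¹' s)) :=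
    hemb.isOpenMap _ isOpen_interior
  have h2 : Subtype.val ''
      interior ((Subtype.val : (affineSpan ℝ s : Set V) → V) ⁻¹' s) ⊆ s :=
    (Set.image_mono interior_subset).trans (Set.image_preimage_subset _ _)
  exact interior_maximal h2 h1 ⟨y, hy, rfl⟩

lemma isCompact_convexJoin {s t : Set V} (hs : IsCompact s) (ht : IsCompact t) :
    IsCompact (convexJoin ℝ s t) := by
  have himg : convexJoin ℝ s t =
      (fun p : (V × V) × ℝ => (1 - p.2) • p.1.1 + p.2 • p.1.2) ''
        ((s ×ˢ t) ×ˢ Set.Icc (0:ℝ) 1) := by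
    ext z
    constructor
    · rw [mem_convexJoin]
      rintro ⟨x, hx, y, hy, b₁, b₂, hb₁, hb₂, hsum, rfl⟩
      refine ⟨((x, y), b₂), ⟨⟨hx, hy⟩, hb₂, by linarith⟩, ?_⟩
      simp only
      rw [show (1:ℝ) - b₂ = b₁ by linarith]
    · rintro ⟨⟨⟨x, y⟩, θ⟩, ⟨⟨hx, hy⟩, hθ⟩, rfl⟩
      rw [mem_convexJoin]
      exact ⟨x, hx, y, hy, 1 - θ, θ, by linarith [hθ.2], hθ.1, by ring, rfl⟩
  rw [himg]
  refine ((hs.prod ht).prod isCompact_Icc).image ?_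
  exact ((continuous_const.sub continuous_snd).smul
      ((continuous_fst.comp continuous_fst))).add
    (continuous_snd.smul (continuous_snd.comp continuous_fst))

end Helpers

noncomputable def liftA (n : ℕ) (h : ℝ) :
    EuclideanSpace ℝ (Fin n) →ᵃ[ℝ] EuclideanSpace ℝ (Fin n) × ℝ where
  toFun x := (x, h)
  linear := LinearMap.inl ℝ _ ℝ
  map_vadd' p v := by simp [Prod.ext_iff]

noncomputable def liftAI (n : ℕ) (h : ℝ) :
    EuclideanSpace ℝ (Fin n) →ᵃⁱ[ℝ] EuclideanSpace ℝ (Fin n) × ℝ :=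
  ⟨liftA n h, fun v => by
    show ‖((v : EuclideanSpace ℝ (Fin n)), (0:ℝ))‖ = ‖v‖
    rw [Prod.norm_def]
    simp [max_eq_left (norm_nonneg v)]⟩

@[simp] lemma liftAI_apply (n : ℕ) (h : ℝ) (x : EuclideanSpace ℝ (Fin n)) :
    liftAI n h x = (x, h) := rfl

/-- The steepness of a subset of ℝⁿ × ℝ: the supremum (in `ℝ≥0∞`) of
`|v' − u'| / ‖v − u‖` over pairs `(u, u'), (v, v')` in the set with `v ≠ u`. -/
noncomputable def Stp {n : ℕ} (S : Set (EuclideanSpace ℝ (Fin n) × ℝ)) : ℝ≥0∞ :=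
  ⨆ u ∈ S, ⨆ v ∈ S, ⨆ (_ : v.1 ≠ u.1), ENNReal.ofReal (|v.2 - u.2| / ‖v.1 - u.1‖)

lemma le_Stp {n : ℕ} {S : Set (EuclideanSpace ℝ (Fin n) × ℝ)}
    {p q : EuclideanSpace ℝ (Fin n) × ℝ}
    (hp : p ∈ S) (hq : q ∈ S) (hne : q.1 ≠ p.1) :
    ENNReal.ofReal (|q.2 - p.2| / ‖q.1 - p.1‖) ≤ Stp S :=
  le_iSup₂_of_le p hp <| le_iSup₂_of_le q hq <| le_iSup_of_le hne le_rfl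

set_option maxHeartbeats 4000000 in
/-- the lateral of a top-heavy frustum is no steeper than the lateral of an upper envelope. -/
theorem statement_12 (n : ℕ) (hn : 1 ≤ n)
    (D₁ D₂ : Set (EuclideanSpace ℝ (Fin n)))
    (hD₁ne : D₁.Nonempty) (hD₂ne : D₂.Nonempty)
    (hD₁cpt : IsCompact D₁) (hD₁conv : Convex ℝ D₁)
    (hD₂cpt : IsCompact D₂) (hD₂conv : Convex ℝ D₂)
    (htop : D₁ ⊆ interior D₂)
    (h₁ h₂ : ℝ) (hh : h₁ < h₂)
    (T₁ T₂ F : Set (EuclideanSpace ℝ (Fin n) × ℝ))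
    (hT₁ : T₁ = (fun x => (x, h₁)) '' D₁)
    (hT₂ : T₂ = (fun x => (x, h₂)) '' D₂)
    (hF : F = convexHull ℝ (T₁ ∪ T₂))
    (S : Set (EuclideanSpace ℝ (Fin n) × ℝ))
    (hS : S = frontier F \ (intrinsicInterior ℝ T₁ ∪ intrinsicInterior ℝ T₂))
    (a : EuclideanSpace ℝ (Fin n)) (a₀ : ℝ) (ha : a ∈ interior D₁) (ha₀ : a₀ < h₁)
    -- trunc(â, T₂) is an upper envelope of F
    (henv : F ⊆ convexHull ℝ ({((a, a₀) : EuclideanSpace ℝ (Fin n) × ℝ)} ∪ T₂))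
    (Sa : Set (EuclideanSpace ℝ (Fin n) × ℝ))
    (hSa : Sa = {z | ∃ w ∈ intrinsicFrontier ℝ T₂, ∃ l ∈ Set.Icc (0:ℝ) 1,
      z = (1 - l) • ((a, a₀) : EuclideanSpace ℝ (Fin n) × ℝ) + l • w}) :
    Stp S ≤ Stp Sa := by
  classical
  have haD₂i : a ∈ interior D₂ := htop (interior_subset ha)
  have haD₂ : a ∈ D₂ := interior_subset haD₂i
  have hD₁D₂ : D₁ ⊆ D₂ := htop.trans interior_subset
  have hD₂cl : IsClosed D₂ := hD₂cpt.isClosed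
  have hD₂bd : Bornology.IsBounded D₂ := hD₂cpt.isBounded
  have hT₂φ : T₂ = ⇑(liftAI n h₂) '' D₂ := by
    rw [hT₂]; exact Set.image_congr fun x _ => rfl
  have hT₁conv : Convex ℝ T₁ := by
    rw [hT₁]; exact hD₁conv.affine_image (liftA n h₁)
  have hT₂conv : Convex ℝ T₂ := by
    rw [hT₂]; exact hD₂conv.affine_image (liftA n h₂)
  have hT₁ne : T₁.Nonempty := by rw [hT₁]; exact hD₁ne.image _
  have hT₂ne : T₂.Nonempty := by rw [hT₂]; exact hD₂ne.image _
  have hT₁cpt : IsCompact T₁ := by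
    rw [hT₁]; exact hD₁cpt.image (continuous_id.prodMk continuous_const)
  have hT₂cpt : IsCompact T₂ := by
    rw [hT₂]; exact hD₂cpt.image (continuous_id.prodMk continuous_const)
  have hFcpt : IsCompact F := by
    rw [hF, Convex.convexHull_union hT₁conv hT₂conv hT₁ne hT₂ne]
    exact isCompact_convexJoin hT₁cpt hT₂cpt
  have hFconv : Convex ℝ F := hF ▸ convex_convexHull ℝ _
  have hT₂F : T₂ ⊆ F := by
    rw [hF]; exact Set.subset_union_right.trans (subset_convexHull ℝ _)
  have hFsub : F ⊆ D₂ ×ˢ Set.Icc h₁ h₂ := by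
    rw [hF]
    refine convexHull_min ?_ (hD₂conv.prod (convex_Icc _ _))
    rintro p (hp | hp)
    · rw [hT₁] at hp; obtain ⟨q, hq, rfl⟩ := hp
      exact ⟨hD₁D₂ hq, le_rfl, hh.le⟩
    · rw [hT₂] at hp; obtain ⟨q, hq, rfl⟩ := hp
      exact ⟨hq, hh.le, le_rfl⟩
  have hSF : S ⊆ F := by
    rw [hS]
    intro z hz
    have := frontier_subset_closure hz.1
    rwa [hFcpt.isClosed.closure_eq] at this
  have hspan : affineSpan ℝ D₂ = ⊤ :=
    hD₂conv.interior_nonempty_iff_affineSpan_eq_top.mp ⟨a, haD₂i⟩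
  -- frontier points of D₂ lifted to h₂ are in the intrinsic frontier of T₂
  have hIF : ∀ w : EuclideanSpace ℝ (Fin n), w ∈ D₂ → w ∉ interior D₂ →
      ((w, h₂) : EuclideanSpace ℝ (Fin n) × ℝ) ∈ intrinsicFrontier ℝ T₂ := by
    intro w hw hwn
    have hwf : w ∈ intrinsicFrontier ℝ D₂ := by
      rw [← closure_diff_intrinsicInterior]
      exact ⟨subset_closure hw,
        fun hins => hwn (intrinsicInterior_subset_interior_of_top hspan hins)⟩
    rw [hT₂φ, AffineIsometry.image_intrinsicFrontier]
    exact ⟨w, hwf, rfl⟩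
  have hRI : ∀ w : EuclideanSpace ℝ (Fin n), w ∈ interior D₂ →
      ((w, h₂) : EuclideanSpace ℝ (Fin n) × ℝ) ∈ intrinsicInterior ℝ T₂ := by
    intro w hw
    rw [hT₂φ, AffineIsometry.image_intrinsicInterior]
    exact ⟨w, interior_subset_intrinsicInterior hw, rfl⟩
  -- there is a point of D₂ not in its interior
  have hfrontier : ∃ w₀ : EuclideanSpace ℝ (Fin n), w₀ ∈ D₂ ∧ w₀ ∉ interior D₂ := by
    obtain ⟨ε, hε0, hε⟩ := Metric.isOpen_iff.mp isOpen_interior a haD₂i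
    set e : EuclideanSpace ℝ (Fin n) := EuclideanSpace.single ⟨0, hn⟩ (ε/2) with hedef
    have henorm : ‖e‖ = ε/2 := by
      rw [hedef, EuclideanSpace.norm_single]
      exact abs_of_pos (by linarith)
    have hb : a + e ∈ D₂ := by
      apply interior_subset; apply hε
      rw [Metric.mem_ball, dist_eq_norm]
      simp only [add_sub_cancel_left]
      rw [henorm]; linarith
    have hba : a ≠ a + e := by
      intro hcon
      have : e = 0 := by
        have := congrArg (· - a) hcon
        simpa using this.symm
      rw [this, norm_zero] at henorm; linarith
    obtain ⟨c₀, hc₀1, hc₀D, hc₀n⟩ := exit_point hD₂cl hD₂bd hb hba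
    exact ⟨a + c₀ • (a + e - a), hc₀D, hc₀n⟩
  have htopSa : ∀ w : EuclideanSpace ℝ (Fin n), w ∈ D₂ → w ∉ interior D₂ →
      ((w, h₂) : EuclideanSpace ℝ (Fin n) × ℝ) ∈ Sa := by
    intro w hw hwn
    rw [hSa]
    exact ⟨(w, h₂), hIF w hw hwn, 1, ⟨zero_le_one, le_rfl⟩, by simp⟩
  -- decomposition of points of F via the envelope
  have hdecomp : ∀ u ∈ F, ∃ w ∈ D₂, ∃ l : ℝ, 0 ≤ l ∧ l ≤ 1 ∧
      u = (1 - l) • ((a, a₀) : EuclideanSpace ℝ (Fin n) × ℝ) + l • ((w, h₂) :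
        EuclideanSpace ℝ (Fin n) × ℝ) := by
    intro u hu
    have h1 := henv hu
    rw [Set.singleton_union, convexHull_insert hT₂ne, hT₂conv.convexHull_eq,
      mem_convexJoin] at h1
    obtain ⟨p, hp, q, hq, hseg⟩ := h1
    rw [Set.mem_singleton_iff] at hp; subst hp
    rw [hT₂] at hq; obtain ⟨w, hw, rfl⟩ := hq
    obtain ⟨b₁, b₂, hb₁, hb₂, hsum, heq⟩ := hseg
    refine ⟨w, hw, b₂, hb₂, by linarith, ?_⟩
    rw [← heq, show (1:ℝ) - b₂ = b₁ by linarith]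
  -- for every point of F there is a point of the cone lateral below it
  have saMem : ∀ u ∈ F, ∃ r : ℝ, r ≤ u.2 ∧
      ((u.1, r) : EuclideanSpace ℝ (Fin n) × ℝ) ∈ Sa := by
    intro u hu
    obtain ⟨w, hw, l, hl0, hl1, hue⟩ := hdecomp u hu
    have hu1 : u.1 = (1 - l) • a + l • w := by rw [hue]; simp
    have hu2 : u.2 = (1 - l) * a₀ + l * h₂ := by rw [hue]; simp
    by_cases hxa : u.1 = a
    · obtain ⟨w₀, hw₀D, hw₀n⟩ := hfrontier
      refine ⟨a₀, ?_, ?_⟩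
      · rw [hu2]; nlinarith
      · rw [hSa, hxa]
        exact ⟨(w₀, h₂), hIF w₀ hw₀D hw₀n, 0, ⟨le_rfl, zero_le_one⟩, by simp⟩
    · have hu1D : u.1 ∈ D₂ := (hFsub hu).1
      have hax : a ≠ u.1 := fun h => hxa h.symm
      obtain ⟨c, hc1, hcD, hcn⟩ := exit_point hD₂cl hD₂bd hu1D hax
      set z := a + c • (u.1 - a) with hzdef
      have hc0 : (0:ℝ) < c := lt_of_lt_of_le zero_lt_one hc1
      set l' := c⁻¹ with hl'def
      have hl'c : l' * c = 1 := inv_mul_cancel₀ hc0.ne'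
      have hl'0 : (0:ℝ) < l' := inv_pos.mpr hc0
      have hl'1 : l' ≤ 1 := by nlinarith
      have hll' : l' ≤ l := by
        by_contra hlt
        push_neg at hlt
        have hμ1 : c * l < 1 := by nlinarith
        have hμ0 : (0:ℝ) ≤ c * l := mul_nonneg hc0.le hl0
        have hzeq : z = (1 - c * l) • a + (c * l) • w := by
          rw [hzdef, hu1]; module
        have : z ∈ interior D₂ := by
          rw [hzeq]
          exact hD₂conv.combo_interior_closure_mem_interior haD₂i
            (subset_closure hw) (by linarith) hμ0 (by ring)
        exact hcn this
      refine ⟨(1 - l') * a₀ + l' * h₂, ?_, ?_⟩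
      · rw [hu2]; nlinarith
      · rw [hSa]
        refine ⟨(z, h₂), hIF z hcD hcn, l', ⟨hl'0.le, hl'1⟩, ?_⟩
        have e1 : (1 - l') • a + l' • z = u.1 := by
          rw [hzdef, smul_add, smul_smul, hl'c]
          module
        rw [Prod.smul_mk, Prod.smul_mk, Prod.mk_add_mk, e1]
        simp
  -- the key per-pair estimate
  have key : ∀ u ∈ S, ∀ v ∈ S, v.1 ≠ u.1 → u.2 ≤ v.2 →
      ENNReal.ofReal ((v.2 - u.2) / ‖v.1 - u.1‖) ≤ Stp Sa := by
    intro u hu v hv hne hle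
    have huF : u ∈ F := hSF hu
    have hvF : v ∈ F := hSF hv
    have hxD : u.1 ∈ D₂ := (hFsub huF).1
    have hyD : v.1 ∈ D₂ := (hFsub hvF).1
    have hs2 : u.2 ≤ h₂ := (hFsub huF).2.2
    have ht2 : v.2 ≤ h₂ := (hFsub hvF).2.2
    obtain ⟨r, hrle, hrSa⟩ := saMem u huF
    have hrh₂ : r ≤ h₂ := hrle.trans hs2
    have hN : (0:ℝ) < ‖v.1 - u.1‖ := by rw [norm_pos_iff, sub_ne_zero]; exact hne
    by_cases hyint : v.1 ∈ interior D₂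
    · -- interior case : use Claim B
      have hvS := hv; rw [hS] at hvS
      have hvnotint : v ∉ interior F := hvS.1.2
      have hvnotri : v ∉ intrinsicInterior ℝ T₂ :=
        fun hc => hvS.2 (Set.mem_union_right _ hc)
      have htne : v.2 ≠ h₂ := by
        intro hteq
        apply hvnotri
        have hveq : v = (v.1, h₂) := by rw [← hteq]
        rw [hveq]
        exact hRI v.1 hyint
      have htlt : v.2 < h₂ := lt_of_le_of_ne ht2 htne
      obtain ⟨c, hc1, hcz, hczn⟩ :=
        exit_point hD₂cl hD₂bd (interior_subset hyint) (Ne.symm hne)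
      set z := u.1 + c • (v.1 - u.1) with hzdef
      have hc0 : (0:ℝ) < c := lt_of_lt_of_le zero_lt_one hc1
      set θ := c⁻¹ with hθdef
      have hθc : θ * c = 1 := inv_mul_cancel₀ hc0.ne'
      have hθ0 : (0:ℝ) < θ := inv_pos.mpr hc0
      have hθ1 : θ ≤ 1 := by nlinarith
      have hzT₂ : ((z, h₂) : EuclideanSpace ℝ (Fin n) × ℝ) ∈ F :=
        hT₂F (by rw [hT₂]; exact ⟨z, hcz, rfl⟩)
      have hpF : (1 - θ) • u + θ • ((z, h₂) : EuclideanSpace ℝ (Fin n) × ℝ) ∈ F :=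
        hFconv huF hzT₂ (by linarith) hθ0.le (by ring)
      have hp1 : ((1 - θ) • u + θ • ((z, h₂) : EuclideanSpace ℝ (Fin n) × ℝ)).1 = v.1 := by
        simp only [Prod.smul_fst, Prod.fst_add]
        rw [hzdef, smul_add, smul_smul, hθc]
        module
      have hp2 : ((1 - θ) • u + θ • ((z, h₂) : EuclideanSpace ℝ (Fin n) × ℝ)).2
          = (1 - θ) * u.2 + θ * h₂ := by
        simp [smul_eq_mul]
      have hClaimB : v.2 ≤ (1 - θ) * u.2 + θ * h₂ := by
        by_contra hcon
        push_neg at hcon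
        set H := (1 - θ) * u.2 + θ * h₂ with hHdef
        have hH2 : H < h₂ := lt_trans hcon htlt
        obtain ⟨δ, hδ0, hδ⟩ := Metric.isOpen_iff.mp isOpen_interior _ hyint
        set Vo : Set (EuclideanSpace ℝ (Fin n) × ℝ) :=
          {p | H < p.2 ∧ p.2 < h₂ ∧ ‖p.1 - v.1‖ * (h₂ - H) < δ * (p.2 - H)} with hVo
        have hVopen : IsOpen Vo := by
          have hVeq : Vo = {p : EuclideanSpace ℝ (Fin n) × ℝ | H < p.2} ∩
              ({p | p.2 < h₂} ∩ {p | ‖p.1 - v.1‖ * (h₂ - H) < δ * (p.2 - H)}) := by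
            ext p; simp [hVo, and_assoc]
          rw [hVeq]
          refine (isOpen_lt continuous_const continuous_snd).inter
            ((isOpen_lt continuous_snd continuous_const).inter
              (isOpen_lt (Continuous.mul ?_ continuous_const)
                (Continuous.mul continuous_const ?_)))
          · exact (continuous_fst.sub continuous_const).norm
          · exact continuous_snd.sub continuous_const
        have hvVo : v ∈ Vo := by
          refine ⟨hcon, htlt, ?_⟩
          simp only [sub_self, norm_zero, zero_mul]
          exact mul_pos hδ0 (by linarith)
        have hVF : Vo ⊆ F := by
          rintro ⟨w', t'⟩ ⟨hh1, hh2, hh3⟩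
          simp only at hh1 hh2 hh3
          set μ := (t' - H) / (h₂ - H) with hμdef
          have hμ0 : (0:ℝ) < μ := div_pos (by linarith) (by linarith)
          have hμ1 : μ < 1 := (div_lt_one (by linarith)).mpr (by linarith)
          have hμmul : μ * (h₂ - H) = t' - H :=
            div_mul_cancel₀ _ (by linarith : h₂ - H ≠ 0)
          set w := v.1 + μ⁻¹ • (w' - v.1) with hwdef
          have hwD : w ∈ D₂ := by
            apply interior_subset; apply hδ
            rw [Metric.mem_ball, dist_eq_norm]
            have h4 : ‖w - v.1‖ = μ⁻¹ * ‖w' - v.1‖ := by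
              rw [hwdef]
              simp only [add_sub_cancel_left]
              rw [norm_smul, Real.norm_eq_abs, abs_of_pos (inv_pos.mpr hμ0)]
            have h5 : ‖w' - v.1‖ < δ * μ := by nlinarith [norm_nonneg (w' - v.1)]
            rw [h4]
            calc μ⁻¹ * ‖w' - v.1‖ < μ⁻¹ * (δ * μ) :=
                  mul_lt_mul_of_pos_left h5 (inv_pos.mpr hμ0)
              _ = δ := by field_simp
          have hwh₂F : ((w, h₂) : EuclideanSpace ℝ (Fin n) × ℝ) ∈ F :=
            hT₂F (by rw [hT₂]; exact ⟨w, hwD, rfl⟩)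
          have hpeq : ((1 - θ) • u + θ • ((z, h₂) : EuclideanSpace ℝ (Fin n) × ℝ))
              = ((v.1, H) : EuclideanSpace ℝ (Fin n) × ℝ) :=
            Prod.ext_iff.mpr ⟨hp1, hp2⟩
          have hvHF : ((v.1, H) : EuclideanSpace ℝ (Fin n) × ℝ) ∈ F := hpeq ▸ hpF
          have hcomb : ((w', t') : EuclideanSpace ℝ (Fin n) × ℝ)
              = (1 - μ) • ((v.1, H) : EuclideanSpace ℝ (Fin n) × ℝ)
                + μ • ((w, h₂) : EuclideanSpace ℝ (Fin n) × ℝ) := by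
            have e1 : (1 - μ) • v.1 + μ • w = w' := by
              rw [hwdef, smul_add, smul_smul, mul_inv_cancel₀ hμ0.ne']
              module
            have e2 : (1 - μ) * H + μ * h₂ = t' := by linarith [hμmul]
            rw [Prod.ext_iff]
            constructor
            · simp only [Prod.smul_fst, Prod.fst_add]
              exact e1.symm
            · simp only [Prod.smul_snd, Prod.snd_add, smul_eq_mul]
              exact e2.symm
          rw [hcomb]
          exact hFconv hvHF hwh₂F (by linarith) hμ0.le (by ring)
        exact hvnotint (interior_maximal hVF hVopen hvVo)
      -- conclude the interior case
      have hzSa : ((z, h₂) : EuclideanSpace ℝ (Fin n) × ℝ) ∈ Sa := htopSa z hcz hczn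
      have hzx : ‖z - u.1‖ = c * ‖v.1 - u.1‖ := by
        have hz' : z - u.1 = c • (v.1 - u.1) := by rw [hzdef]; abel
        rw [hz', norm_smul, Real.norm_eq_abs, abs_of_pos hc0]
      have hzne : ((z, h₂) : EuclideanSpace ℝ (Fin n) × ℝ).1
          ≠ ((u.1, r) : EuclideanSpace ℝ (Fin n) × ℝ).1 := by
        show z ≠ u.1
        intro hcontra
        have h0 : (0:ℝ) = c * ‖v.1 - u.1‖ := by
          rw [← hzx, hcontra, sub_self, norm_zero]
        nlinarith
      refine le_trans ?_ (le_Stp hrSa hzSa hzne)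
      apply ENNReal.ofReal_le_ofReal
      show (v.2 - u.2) / ‖v.1 - u.1‖ ≤ |h₂ - r| / ‖z - u.1‖
      rw [abs_of_nonneg (by linarith : (0:ℝ) ≤ h₂ - r), hzx]
      rw [div_le_div_iff₀ hN (mul_pos hc0 hN)]
      have hB : v.2 - u.2 ≤ θ * (h₂ - u.2) := by nlinarith
      calc (v.2 - u.2) * (c * ‖v.1 - u.1‖)
          ≤ (θ * (h₂ - u.2)) * (c * ‖v.1 - u.1‖) :=
            mul_le_mul_of_nonneg_right hB (mul_pos hc0 hN).le
        _ = (θ * c) * ((h₂ - u.2) * ‖v.1 - u.1‖) := by ring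
        _ = (h₂ - u.2) * ‖v.1 - u.1‖ := by rw [hθc, one_mul]
        _ ≤ (h₂ - r) * ‖v.1 - u.1‖ :=
            mul_le_mul_of_nonneg_right (by linarith) hN.le
    · -- boundary case
      have hq : ((v.1, h₂) : EuclideanSpace ℝ (Fin n) × ℝ) ∈ Sa := htopSa v.1 hyD hyint
      have hne' : ((v.1, h₂) : EuclideanSpace ℝ (Fin n) × ℝ).1
          ≠ ((u.1, r) : EuclideanSpace ℝ (Fin n) × ℝ).1 := hne
      refine le_trans ?_ (le_Stp hrSa hq hne')
      apply ENNReal.ofReal_le_ofReal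
      show (v.2 - u.2) / ‖v.1 - u.1‖ ≤ |h₂ - r| / ‖v.1 - u.1‖
      rw [abs_of_nonneg (by linarith : (0:ℝ) ≤ h₂ - r)]
      rw [div_le_div_iff₀ hN hN]
      exact mul_le_mul_of_nonneg_right (by linarith) hN.le
  -- assemble
  refine iSup₂_le fun u hu => iSup₂_le fun v hv => iSup_le fun hne => ?_
  rcases le_total u.2 v.2 with hle | hle
  · rw [abs_of_nonneg (sub_nonneg.mpr hle)]
    exact key u hu v hv hne hle
  · rw [abs_of_nonpos (sub_nonpos.mpr hle), neg_sub, norm_sub_rev]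
    exact key v hv u hu (Ne.symm hne) hle
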